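/- arXiv:1206.4001 — 3 statements merged into one kernel-verified Lean document; each statement's English description precedes it below -/
import Mathlib

section
/- For every k ≥ 2 and n ≥ 2, N_k(2,n) = ρ_k(n) + 1, where ρ_k(n) = |P^k[n]| is the number of order-k line partitions. -/
/-- Monochromatic monotone path of length `n` in a `2`-coloring of the `k`-subsets of
`{0,…,N-1}`: vertices `x_0 < ⋯ < x_{n+k-2}` such that all `n` consecutive `k`-tuples
receive the same color. -/
def HasMonoPathK (k : ℕ) {N q : ℕ} (n : ℕ) (c : (Fin k → Fin N) → Fin q) : Prop :=
  ∃ x : Fin (n + k - 1) → Fin N, StrictMono x ∧ ∃ col : Fin q,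
    ∀ i : ℕ, ∀ _ : i < n,
      c (fun j => x ⟨i + j.1, by have := j.2; omega⟩) = col

/-- Order-`k` line partitions live in the iterated type `PT n j`, where `PT n 0`
represents `P^2[n] = [n]^2` and `PT n (j+1)` consists of finite families of elements of
`PT n j`. -/
def PT (n : ℕ) : ℕ → Type
  | 0 => Fin n × Fin n
  | k + 1 => Finset (PT n k)

instance PT.decEq (n : ℕ) : (k : ℕ) → DecidableEq (PT n k)
  | 0 => inferInstanceAs (DecidableEq (Fin n × Fin n))
  | k + 1 =>
    have := PT.decEq n k
    inferInstanceAs (DecidableEq (Finset (PT n k)))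

/-- The containment order: coordinatewise on `P^2[n] = [n]^2`, set containment above. -/
def PT.Sub (n : ℕ) : (k : ℕ) → PT n k → PT n k → Prop
  | 0 => fun a b : Fin n × Fin n => a.1 ≤ b.1 ∧ a.2 ≤ b.2
  | k + 1 => fun F G : Finset (PT n k) => F ⊆ G

/-- `PT.IsPart n k` cuts out `P^{k+2}[n]`: every element of `PT n 0 = [n]^2` is an
order-`2` line partition, and an order-`(k+3)` line partition is a family of
order-`(k+2)` line partitions closed downwards under containment. -/
def PT.IsPart (n : ℕ) : (k : ℕ) → PT n k → Prop
  | 0 => fun _ => True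
  | k + 1 => fun F : Finset (PT n k) =>
      ∀ S ∈ F, PT.IsPart n k S ∧ ∀ S', PT.IsPart n k S' → PT.Sub n k S' S → S' ∈ F

namespace MS

instance PTFintype (n : ℕ) : ∀ j, Fintype (PT n j)
  | 0 => inferInstanceAs (Fintype (Fin n × Fin n))
  | j + 1 =>
    have := PTFintype n j
    inferInstanceAs (Fintype (Finset (PT n j)))

def toFinset {n j : ℕ} (a : PT n (j+1)) : Finset (PT n j) := a

def toPair {n : ℕ} (a : PT n 0) : Fin n × Fin n := a

lemma sub_succ_iff {n j : ℕ} (a b : PT n (j+1)) :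
    PT.Sub n (j+1) a b ↔ toFinset a ⊆ toFinset b := Iff.rfl

lemma sub_zero_iff {n : ℕ} (a b : PT n 0) :
    PT.Sub n 0 a b ↔ (toPair a).1 ≤ (toPair b).1 ∧ (toPair a).2 ≤ (toPair b).2 := Iff.rfl

lemma isPart_succ_iff {n j : ℕ} (F : PT n (j+1)) :
    PT.IsPart n (j+1) F ↔ ∀ S ∈ toFinset F, PT.IsPart n j S ∧
      ∀ S', PT.IsPart n j S' → PT.Sub n j S' S → S' ∈ toFinset F := Iff.rfl

lemma sub_refl {n : ℕ} : ∀ (j : ℕ) (a : PT n j), PT.Sub n j a a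
  | 0, a => ⟨le_refl _, le_refl _⟩
  | j + 1, a => Finset.Subset.refl (toFinset a)

lemma sub_trans {n : ℕ} : ∀ (j : ℕ) (a b c : PT n j),
    PT.Sub n j a b → PT.Sub n j b c → PT.Sub n j a c
  | 0, a, b, c, h1, h2 => ⟨le_trans h1.1 h2.1, le_trans h1.2 h2.2⟩
  | j + 1, a, b, c, h1, h2 => by
    have h1' : toFinset a ⊆ toFinset b := h1
    have h2' : toFinset b ⊆ toFinset c := h2
    exact h1'.trans h2'

def wPT (n : ℕ) : ∀ j, PT n j → ℕ
  | 0, p => (toPair p).1.val + (toPair p).2.val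
  | _ + 1, F => (toFinset F).card

lemma sub_w {n : ℕ} : ∀ (j : ℕ) (a b : PT n j), PT.Sub n j a b → wPT n j a ≤ wPT n j b
  | 0, a, b, h => Nat.add_le_add h.1 h.2
  | j + 1, a, b, h => Finset.card_le_card h

lemma sub_antisymm_w {n : ℕ} : ∀ (j : ℕ) (a b : PT n j),
    PT.Sub n j a b → wPT n j b ≤ wPT n j a → a = b
  | 0, a, b, h, hw => by
    have h1 : ((toPair a).1 : ℕ) ≤ (toPair b).1 := h.1
    have h2 : ((toPair a).2 : ℕ) ≤ (toPair b).2 := h.2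
    simp only [wPT] at hw
    have e1 : (toPair a).1 = (toPair b).1 := by apply Fin.ext; omega
    have e2 : (toPair a).2 = (toPair b).2 := by apply Fin.ext; omega
    show toPair a = toPair b
    exact Prod.ext e1 e2
  | j + 1, a, b, h, hw => Finset.eq_of_subset_of_card_le (t := toFinset b) h hw

def junkPT (n : ℕ) (hn : 0 < n) : ∀ j, PT n j
  | 0 => ((⟨0, hn⟩ : Fin n), (⟨0, hn⟩ : Fin n))
  | _ + 1 => (∅ : Finset _)

noncomputable def delta {n : ℕ} (hn : 0 < n) {j : ℕ} (a b : PT n (j+1)) : PT n j :=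
  if h : (toFinset b \ toFinset a).Nonempty then h.choose else junkPT n hn j

lemma delta_mem {n : ℕ} (hn : 0 < n) {j : ℕ} (a b : PT n (j+1))
    (h : ¬ PT.Sub n (j+1) b a) :
    delta hn a b ∈ toFinset b ∧ delta hn a b ∉ toFinset a := by
  have hne : (toFinset b \ toFinset a).Nonempty := by
    rw [Finset.sdiff_nonempty]; exact h
  have := hne.choose_spec
  rw [Finset.mem_sdiff] at this
  rw [delta, dif_pos hne]
  exact this

noncomputable def chainPt {n : ℕ} (hn : 0 < n) : ∀ j, (ℕ → PT n j) → PT n 0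
  | 0, g => g 0
  | j + 1, g => chainPt hn j (fun t => delta hn (g t) (g (t+1)))

lemma chainPt_congr {n : ℕ} (hn : 0 < n) : ∀ (j : ℕ) (g1 g2 : ℕ → PT n j),
    (∀ t ≤ j, g1 t = g2 t) → chainPt hn j g1 = chainPt hn j g2
  | 0, g1, g2, h => h 0 (le_refl 0)
  | j + 1, g1, g2, h => by
    show chainPt hn j _ = chainPt hn j _
    apply chainPt_congr hn j
    intro t ht
    rw [h t (by omega), h (t+1) (by omega)]

/-- elements of an `IsPart` family are `IsPart`. -/
lemma mem_isPart {n j : ℕ} {F : PT n (j+1)} (hF : PT.IsPart n (j+1) F)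
    {S : PT n j} (hS : S ∈ toFinset F) : PT.IsPart n j S := (hF S hS).1

lemma mem_of_sub_mem {n j : ℕ} {F : PT n (j+1)} (hF : PT.IsPart n (j+1) F)
    {S S' : PT n j} (hS : S ∈ toFinset F) (hS' : PT.IsPart n j S')
    (hsub : PT.Sub n j S' S) : S' ∈ toFinset F := (hF S hS).2 S' hS' hsub

/-- KEY lemma for the lower bound: shifting a "¬Sub chain" by one is never Sub-below. -/
lemma chain_key {n : ℕ} (hn : 0 < n) : ∀ (j : ℕ) (g : ℕ → PT n j),
    (∀ t ≤ j + 1, PT.IsPart n j (g t)) →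
    (∀ t ≤ j, ¬ PT.Sub n j (g (t+1)) (g t)) →
    ¬ PT.Sub n 0 (chainPt hn j (fun t => g (t+1))) (chainPt hn j g)
  | 0, g, hip, hns => by simpa [chainPt] using hns 0 (le_refl 0)
  | j + 1, g, hip, hns => by
    set e : ℕ → PT n j := fun t => delta hn (g t) (g (t+1)) with he
    have hmem : ∀ t ≤ j + 1, e t ∈ toFinset (g (t+1)) ∧ e t ∉ toFinset (g t) := by
      intro t ht
      exact delta_mem hn _ _ (hns t ht)
    have hipe : ∀ t ≤ j + 1, PT.IsPart n j (e t) := by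
      intro t ht
      exact mem_isPart (hip (t+1) (by omega)) (hmem t ht).1
    have hnse : ∀ t ≤ j, ¬ PT.Sub n j (e (t+1)) (e t) := by
      intro t ht hsub
      exact (hmem (t+1) (by omega)).2
        (mem_of_sub_mem (hip (t+1) (by omega)) (hmem t (by omega)).1
          (hipe (t+1) (by omega)) hsub)
    have IH := chain_key hn j e hipe hnse
    show ¬ PT.Sub n 0 (chainPt hn j fun t => delta hn (g (t+1)) (g (t+1+1)))
      (chainPt hn j e)
    exact IH

end MS
namespace MS

section Lower

variable {n k' N : ℕ} (hn0 : 0 < n) (ν : Fin N → PT n k')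

/-- The extremal coloring. -/
noncomputable def lowC : (Fin (k'+2) → Fin N) → Fin 2 := fun f =>
  if (toPair (chainPt hn0 k' (fun t =>
        if h : t < k'+2 then ν (f ⟨t, h⟩) else junkPT n hn0 k'))).1.1
   < (toPair (chainPt hn0 k' (fun t =>
        if h : t + 1 < k'+2 then ν (f ⟨t+1, h⟩) else junkPT n hn0 k'))).1.1
  then 0 else 1

lemma lowC_no_path
    (hpart : ∀ i, PT.IsPart n k' (ν i))
    (hmono : ∀ i j : Fin N, i < j → ¬ PT.Sub n k' (ν j) (ν i)) :
    ¬ HasMonoPathK (k'+2) n (lowC hn0 ν) := by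
  rintro ⟨x, hx, col, hcol⟩
  have hidx : ∀ t, t < n + k' + 1 → t < n + (k'+2) - 1 := by omega
  set G : ℕ → PT n k' := fun t =>
    if h : t < n + k' + 1 then ν (x ⟨t, hidx t h⟩) else junkPT n hn0 k' with hG
  set p : ℕ → PT n 0 := fun i => chainPt hn0 k' (fun t => G (t + i)) with hp
  -- rewrite each window color in terms of `p`
  have claimA : ∀ i, i < n →
      (if (toPair (p i)).1.1 < (toPair (p (i+1))).1.1 then (0 : Fin 2) else 1) = col := by
    intro i hi
    have := hcol i hi
    rw [lowC] at this
    rw [show chainPt hn0 k' (fun t => if h : t < k'+2 then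
          ν ((fun j : Fin (k'+2) => x ⟨i + j.1, by have := j.2; omega⟩) ⟨t, h⟩)
          else junkPT n hn0 k') = p i from ?_,
        show chainPt hn0 k' (fun t => if h : t + 1 < k'+2 then
          ν ((fun j : Fin (k'+2) => x ⟨i + j.1, by have := j.2; omega⟩) ⟨t+1, h⟩)
          else junkPT n hn0 k') = p (i+1) from ?_] at this
    · exact this
    · apply chainPt_congr
      intro t ht
      simp only [hG]
      rw [dif_pos (show t + 1 < k'+2 by omega)]
      rw [dif_pos (show t + (i+1) < n + k' + 1 by omega)]
      congr 1
      apply congrArg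
      apply Fin.ext
      simp only []
      omega
    · apply chainPt_congr
      intro t ht
      simp only [hG]
      rw [dif_pos (show t < k'+2 by omega)]
      rw [dif_pos (show t + i < n + k' + 1 by omega)]
      congr 1
      apply congrArg
      apply Fin.ext
      simp only []
      omega
  have claimB : ∀ i, i < n → ¬ PT.Sub n 0 (p (i+1)) (p i) := by
    intro i hi
    have key := chain_key hn0 k' (fun t => G (t + i)) ?_ ?_
    · intro hsub
      apply key
      rw [show (fun t => G (t + 1 + i)) = (fun t => G (t + (i+1))) from ?_]
      · exact hsub
      · funext t; congr 1; omega
    · intro t ht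
      simp only [hG]
      rw [dif_pos (show t + i < n + k' + 1 by omega)]
      exact hpart _
    · intro t ht
      simp only [hG]
      rw [dif_pos (show t + 1 + i < n + k' + 1 by omega),
          dif_pos (show t + i < n + k' + 1 by omega)]
      apply hmono
      apply hx
      exact Fin.mk_lt_mk.2 (by omega)
  -- two cases on the color
  have hcol2 : col = 0 ∨ col = 1 := by
    rcases Fin.exists_fin_two.1 ⟨col, rfl⟩ with h | h <;> [left; right] <;> exact h
  have hbound0 : ((toPair (p n)).1 : ℕ) < n := (toPair (p n)).1.isLt
  have hbound1 : ((toPair (p n)).2 : ℕ) < n := (toPair (p n)).2.isLt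
  rcases hcol2 with rfl | rfl
  · have hstep : ∀ i, i < n → ((toPair (p i)).1 : ℕ) < ((toPair (p (i+1))).1 : ℕ) := by
      intro i hi
      have := claimA i hi
      by_contra h
      rw [if_neg h] at this
      exact absurd this (by decide)
    have : ∀ i, i ≤ n → i ≤ ((toPair (p i)).1 : ℕ) := by
      intro i
      induction i with
      | zero => omega
      | succ i ih => intro hi; have := hstep i (by omega); have := ih (by omega); omega
    have := this n (le_refl n)
    omega
  · have hstep : ∀ i, i < n → ((toPair (p i)).2 : ℕ) < ((toPair (p (i+1))).2 : ℕ) := by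
      intro i hi
      have hA := claimA i hi
      have hle1 : ((toPair (p (i+1))).1 : ℕ) ≤ ((toPair (p i)).1 : ℕ) := by
        by_contra h
        rw [if_pos (by omega)] at hA
        exact absurd hA (by decide)
      have := claimB i hi
      rw [sub_zero_iff] at this
      by_contra h
      exact this ⟨Fin.le_def.2 (by omega), Fin.le_def.2 (by omega)⟩
    have : ∀ i, i ≤ n → i ≤ ((toPair (p i)).2 : ℕ) := by
      intro i
      induction i with
      | zero => omega
      | succ i ih => intro hi; have := hstep i (by omega); have := ih (by omega); omega
    have := this n (le_refl n)
    omega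

end Lower

end MS
namespace MS

lemma exists_nu (n k' N : ℕ)
    (hN : N ≤ Nat.card {F : PT n k' // PT.IsPart n k' F}) :
    ∃ ν : Fin N → PT n k', (∀ i, PT.IsPart n k' (ν i)) ∧
      ∀ i j : Fin N, i < j → ¬ PT.Sub n k' (ν j) (ν i) := by
  set V := {F : PT n k' // PT.IsPart n k' F} with hV
  haveI : Finite V := Subtype.finite
  haveI : Fintype V := Fintype.ofFinite V
  set enc := Fintype.equivFin V with henc
  set f : V → ℕ ×ₗ ℕ := fun F => toLex (wPT n k' F.1, (enc F).val) with hf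
  have finj : Function.Injective f := by
    intro a b h
    have h2 := congrArg (fun p => (ofLex p).2) h
    simp only [hf] at h2
    exact enc.injective (Fin.ext h2)
  letI : LinearOrder V := LinearOrder.lift' f finj
  have hle_iff : ∀ a b : V, a ≤ b ↔ f a ≤ f b := fun a b => Iff.rfl
  have hN' : N ≤ Fintype.card V := by
    rwa [Nat.card_eq_fintype_card] at hN
  have hcard : (Finset.univ : Finset V).card = Fintype.card V := Finset.card_univ
  set iso := (Finset.univ : Finset V).orderIsoOfFin hcard with hiso
  refine ⟨fun i => ((iso (Fin.castLE hN' i)) : V).1, fun i => ((iso _) : V).2, ?_⟩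
  intro i j hij hsub
  have hlt : ((iso (Fin.castLE hN' i)) : V) < ((iso (Fin.castLE hN' j)) : V) := by
    have : (Fin.castLE hN' i) < (Fin.castLE hN' j) := by
      simp only [Fin.lt_def, Fin.coe_castLE]
      exact hij
    exact Subtype.coe_lt_coe.2 (iso.lt_iff_lt.2 this)
  set va := ((iso (Fin.castLE hN' i)) : V)
  set vb := ((iso (Fin.castLE hN' j)) : V)
  have hle : f va ≤ f vb := (hle_iff va vb).1 (le_of_lt hlt)
  have hw : wPT n k' va.1 ≤ wPT n k' vb.1 := by
    rcases Prod.Lex.le_iff.1 hle with h | h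
    · exact le_of_lt h
    · exact le_of_eq h.1
  have := sub_antisymm_w k' vb.1 va.1 hsub hw
  exact absurd (Subtype.ext this) (ne_of_gt hlt)

lemma lower_bound (n k' N : ℕ) (hn0 : 0 < n)
    (hN : N ≤ Nat.card {F : PT n k' // PT.IsPart n k' F}) :
    ∃ c : (Fin (k'+2) → Fin N) → Fin 2, ¬ HasMonoPathK (k'+2) n c := by
  obtain ⟨ν, h1, h2⟩ := exists_nu n k' N hN
  exact ⟨lowC hn0 ν, lowC_no_path hn0 ν h1 h2⟩

end MS
namespace MS

section Upper
open scoped Classical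

variable {n k' N : ℕ}

def consN (u : Fin N) (a : ℕ → Fin N) : ℕ → Fin N :=
  fun t => match t with
  | 0 => u
  | t+1 => a t

def shiftL (l : ℕ) (a : ℕ → Fin N) (v : Fin N) : ℕ → Fin N :=
  fun t => if t + 1 < l then a (t+1) else v

def sortedBelow (l : ℕ) (a : ℕ → Fin N) : Prop :=
  ∀ s t, s < t → t < l → a s < a t

variable (c : (Fin (k'+2) → Fin N) → Fin 2)

def PathEnd (col : Fin 2) (m : ℕ) (a : ℕ → Fin N) : Prop :=
  ∃ x : Fin (m + k' + 1) → Fin N, StrictMono x ∧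
    (∀ i, ∀ _ : i < m,
      c (fun j : Fin (k'+2) => x ⟨i + j.1, by have := j.2; omega⟩) = col) ∧
    (∀ t, ∀ _ : t ≤ k', x ⟨m + t, by omega⟩ = a t)

noncomputable def Rv (col : Fin 2) (a : ℕ → Fin N) : ℕ :=
  sSup {m | PathEnd c col m a}

def edgeT (a : ℕ → Fin N) (v : Fin N) : Fin (k'+2) → Fin N :=
  fun j => if j.1 ≤ k' then a j.1 else v

variable {c}

lemma pathEnd_lt (hc : ¬ HasMonoPathK (k'+2) n c) {col m a}
    (h : PathEnd c col m a) : m < n := by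
  obtain ⟨x, hx, hwin, _⟩ := h
  by_contra hm
  apply hc
  refine ⟨fun s : Fin (n + (k'+2) - 1) => x ⟨s.1, by have := s.2; omega⟩, ?_, col, ?_⟩
  · intro s t hst
    exact hx (Fin.mk_lt_mk.2 hst)
  · intro i hi
    exact hwin i (by omega)

lemma pathEnd_zero {col a} (ha : sortedBelow (k'+1) a) : PathEnd c col 0 a := by
  refine ⟨fun s => a s.1, ?_, ?_, ?_⟩
  · intro s t hst
    exact ha s.1 t.1 hst (by have := t.2; omega)
  · intro i hi; omega
  · intro t ht
    show a (0 + t) = a t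
    rw [Nat.zero_add]

lemma pathEnd_bdd (hc : ¬ HasMonoPathK (k'+2) n c) {col a} :
    BddAbove {m | PathEnd c col m a} :=
  ⟨n, fun m hm => le_of_lt (pathEnd_lt hc hm)⟩

lemma Rv_lt (hc : ¬ HasMonoPathK (k'+2) n c) {col a} (ha : sortedBelow (k'+1) a) :
    Rv c col a < n := by
  have h0 : (0 : ℕ) ∈ {m | PathEnd c col m a} := pathEnd_zero ha
  have h1 : Rv c col a ≤ n - 1 :=
    csSup_le ⟨0, h0⟩ (fun m hm => by have := pathEnd_lt hc hm; omega)
  have hn0 : 0 < n := pathEnd_lt hc h0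
  omega

lemma Rv_mem (hc : ¬ HasMonoPathK (k'+2) n c) {col a} (ha : sortedBelow (k'+1) a) :
    PathEnd c col (Rv c col a) a :=
  Nat.sSup_mem ⟨0, pathEnd_zero ha⟩ (pathEnd_bdd hc)

lemma pathEnd_extend {col m} {a : ℕ → Fin N} {v : Fin N}
    (hv : ∀ t, t ≤ k' → a t < v) (hcol : c (edgeT a v) = col)
    (hp : PathEnd c col m a) : PathEnd c col (m+1) (shiftL (k'+1) a v) := by
  obtain ⟨x, hx, hwin, hsuf⟩ := hp
  have hxv : ∀ s : Fin (m + k' + 1), x s < v := by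
    intro s
    have h1 : x s ≤ x ⟨m + k', by omega⟩ :=
      hx.monotone (Fin.le_def.2 (show (s : ℕ) ≤ m + k' from by have := s.2; omega))
    have h2 : x ⟨m + k', by omega⟩ = a k' := hsuf k' (le_refl k')
    rw [h2] at h1
    exact lt_of_le_of_lt h1 (hv k' (le_refl k'))
  set x' : Fin (m+1+k'+1) → Fin N :=
    fun s => if h : s.1 < m + k' + 1 then x ⟨s.1, h⟩ else v with hx'
  refine ⟨x', ?_, ?_, ?_⟩
  · intro s t hst
    simp only [hx']
    by_cases h1 : s.1 < m + k' + 1 <;> by_cases h2 : t.1 < m + k' + 1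
    · rw [dif_pos h1, dif_pos h2]
      exact hx (Fin.mk_lt_mk.2 hst)
    · rw [dif_pos h1, dif_neg h2]
      exact hxv _
    · exfalso; have := Fin.lt_def.1 hst; omega
    · exfalso
      have := Fin.lt_def.1 hst
      have := s.2; have := t.2
      omega
  · intro i hi
    by_cases him : i < m
    · have heq : (fun j : Fin (k'+2) => x' ⟨i + j.1, by have := j.2; omega⟩)
          = (fun j : Fin (k'+2) => x ⟨i + j.1, by have := j.2; omega⟩) := by
        funext j
        simp only [hx']
        rw [dif_pos (show i + j.1 < m + k' + 1 by have := j.2; omega)]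
      rw [heq]
      exact hwin i him
    · obtain rfl : m = i := by omega
      have heq : (fun j : Fin (k'+2) => x' ⟨m + j.1, by have := j.2; omega⟩)
          = edgeT a v := by
        funext j
        simp only [hx', edgeT]
        by_cases hj : j.1 ≤ k'
        · rw [dif_pos (show m + j.1 < m + k' + 1 by omega), if_pos hj]
          exact hsuf j.1 hj
        · rw [dif_neg (show ¬ (m + j.1 < m + k' + 1) by have := j.2; omega), if_neg hj]
      rw [heq]
      exact hcol
  · intro t ht
    simp only [hx', shiftL]
    by_cases htk : t + 1 < k' + 1
    · rw [dif_pos (show m + 1 + t < m + k' + 1 by omega), if_pos htk]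
      have := hsuf (t+1) (by omega)
      rw [← this]
      congr 1
      apply Fin.ext
      show m + 1 + t = m + (t + 1)
      omega
    · rw [dif_neg (show ¬ (m + 1 + t < m + k' + 1) by omega), if_neg htk]

variable (c) in
noncomputable def psi (hn0 : 0 < n) : (d : ℕ) → (ℕ → Fin N) → PT n d
  | 0, a =>
    show Fin n × Fin n from
      (⟨min (Rv c 0 a) (n-1), by omega⟩, ⟨min (Rv c 1 a) (n-1), by omega⟩)
  | d+1, a =>
    show Finset (PT n d) from
      Finset.filter (fun S => PT.IsPart n d S ∧
          ∃ u : Fin N, u < a 0 ∧ PT.Sub n d S (psi hn0 d (consN u a)))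
        (Finset.univ : Finset (PT n d))

lemma psi_isPart (hn0 : 0 < n) : ∀ (d : ℕ) (a : ℕ → Fin N),
    PT.IsPart n d (psi c hn0 d a)
  | 0, a => trivial
  | d+1, a => by
    rw [isPart_succ_iff]
    intro S hS
    have hS' := Finset.mem_filter.1 hS
    obtain ⟨-, hSpart, u, hu, hsub⟩ := hS'
    refine ⟨hSpart, fun S' hS'p hS'sub => ?_⟩
    exact Finset.mem_filter.2 ⟨Finset.mem_univ _, hS'p, u, hu,
      sub_trans d S' S _ hS'sub hsub⟩

end Upper

end MS
namespace MS

section Upper2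
open scoped Classical

variable {n k' N : ℕ} {c : (Fin (k'+2) → Fin N) → Fin 2}

lemma fin2cases : ∀ z : Fin 2, z = 0 ∨ z = 1 := by decide

lemma psi_succ_mem (hn0 : 0 < n) (d : ℕ) (a : ℕ → Fin N) (S : PT n d) :
    S ∈ toFinset (psi c hn0 (d+1) a) ↔ PT.IsPart n d S ∧
      ∃ u : Fin N, u < a 0 ∧ PT.Sub n d S (psi c hn0 d (consN u a)) := by
  show S ∈ Finset.filter _ _ ↔ _
  rw [Finset.mem_filter]
  simp only [Finset.mem_univ, true_and]

lemma psi_key (hn0 : 0 < n) (hc : ¬ HasMonoPathK (k'+2) n c) :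
    ∀ d, d ≤ k' → ∀ (a : ℕ → Fin N) (v : Fin N),
    sortedBelow (k'+1-d) a → (∀ t, t < k'+1-d → a t < v) →
    ¬ PT.Sub n d (psi c hn0 d (shiftL (k'+1-d) a v)) (psi c hn0 d a) := by
  intro d
  induction d with
  | zero =>
    intro _ a v hsort hv hsub
    have hsort' : sortedBelow (k'+1) a := by
      intro s t hst htl; exact hsort s t hst (by omega)
    have hv' : ∀ t, t ≤ k' → a t < v := fun t ht => hv t (by omega)
    have h1 : (⟨min (Rv c 0 (shiftL (k'+1-0) a v)) (n-1), by omega⟩ : Fin n)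
        ≤ ⟨min (Rv c 0 a) (n-1), by omega⟩ := hsub.1
    have h2 : (⟨min (Rv c 1 (shiftL (k'+1-0) a v)) (n-1), by omega⟩ : Fin n)
        ≤ ⟨min (Rv c 1 a) (n-1), by omega⟩ := hsub.2
    rw [Fin.mk_le_mk] at h1 h2
    rcases fin2cases (c (edgeT a v)) with hcol | hcol
    · -- red: the red invariant strictly increases
      have hmem : PathEnd c 0 (Rv c 0 a + 1) (shiftL (k'+1) a v) :=
        pathEnd_extend hv' hcol (Rv_mem hc hsort')
      have hup : Rv c 0 a + 1 ≤ Rv c 0 (shiftL (k'+1) a v) :=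
        le_csSup (pathEnd_bdd hc) hmem
      have hlt1 : Rv c 0 (shiftL (k'+1) a v) < n := by
        have hb : Rv c 0 (shiftL (k'+1) a v) ≤ n - 1 :=
          csSup_le ⟨Rv c 0 a + 1, hmem⟩
            (fun m hm => by have := pathEnd_lt hc hm; omega)
        have h0 : (0:ℕ) < n := by
          have := pathEnd_lt hc (pathEnd_zero (c := c) (col := 0) hsort'); omega
        omega
      have hlt2 : Rv c 0 a < n := Rv_lt hc hsort'
      have : k' + 1 - 0 = k' + 1 := by omega
      rw [this] at h1
      omega
    · -- blue: the blue invariant strictly increases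
      have hmem : PathEnd c 1 (Rv c 1 a + 1) (shiftL (k'+1) a v) :=
        pathEnd_extend hv' hcol (Rv_mem hc hsort')
      have hup : Rv c 1 a + 1 ≤ Rv c 1 (shiftL (k'+1) a v) :=
        le_csSup (pathEnd_bdd hc) hmem
      have hlt1 : Rv c 1 (shiftL (k'+1) a v) < n := by
        have hb : Rv c 1 (shiftL (k'+1) a v) ≤ n - 1 :=
          csSup_le ⟨Rv c 1 a + 1, hmem⟩
            (fun m hm => by have := pathEnd_lt hc hm; omega)
        have h0 : (0:ℕ) < n := by
          have := pathEnd_lt hc (pathEnd_zero (c := c) (col := 0) hsort'); omega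
        omega
      have hlt2 : Rv c 1 a < n := Rv_lt hc hsort'
      have : k' + 1 - 0 = k' + 1 := by omega
      rw [this] at h2
      omega
  | succ d IH =>
    intro hd a v hsort hv hsub
    set l := k' + 1 - (d+1) with hl
    have hl1 : 1 ≤ l := by omega
    have hkd : k' + 1 - d = l + 1 := by omega
    have hsub' : toFinset (psi c hn0 (d+1) (shiftL l a v)) ⊆ toFinset (psi c hn0 (d+1) a) := hsub
    -- the canonical member of the shifted family
    set S : PT n d := psi c hn0 d (consN (a 0) (shiftL l a v)) with hS
    have hSmem : S ∈ toFinset (psi c hn0 (d+1) (shiftL l a v)) := by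
      rw [psi_succ_mem]
      refine ⟨psi_isPart hn0 d _, a 0, ?_, sub_refl d S⟩
      show a 0 < shiftL l a v 0
      rw [shiftL]
      by_cases h1l : 0 + 1 < l
      · rw [if_pos h1l]
        exact hsort 0 1 (by omega) (by omega)
      · rw [if_neg h1l]
        exact hv 0 (by omega)
    have hS2 := hsub' hSmem
    rw [psi_succ_mem] at hS2
    obtain ⟨-, u', hu', hsubS⟩ := hS2
    -- apply the induction hypothesis to `consN u' a`
    have hkey := IH (by omega) (consN u' a) v ?_ ?_
    · apply hkey
      have heq : shiftL (k'+1-d) (consN u' a) v = consN (a 0) (shiftL l a v) := by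
        funext t
        rw [hkd]
        match t with
        | 0 =>
          show (if 0 + 1 < l + 1 then consN u' a (0+1) else v) = a 0
          rw [if_pos (by omega)]
          rfl
        | t+1 =>
          show (if t + 1 + 1 < l + 1 then consN u' a (t+1+1) else v)
              = shiftL l a v t
          rw [shiftL]
          by_cases htl : t + 1 < l
          · rw [if_pos (by omega), if_pos htl]
            rfl
          · rw [if_neg (by omega), if_neg htl]
      rw [heq]
      exact hsubS
    · -- sortedness of `consN u' a`
      intro s t hst htl
      rw [hkd] at htl
      match s, t with
      | 0, t+1 =>
        show u' < a t
        rcases Nat.eq_or_lt_of_le (Nat.one_le_iff_ne_zero.2 (by omega) : 1 ≤ t+1) with h | h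
        · have : t = 0 := by omega
          subst this
          exact hu'
        · exact lt_trans hu' (hsort 0 t (by omega) (by omega))
      | s+1, t+1 =>
        show a s < a t
        exact hsort s t (by omega) (by omega)
    · -- bound of `consN u' a`
      intro t htl
      rw [hkd] at htl
      match t with
      | 0 => exact lt_trans hu' (hv 0 (by omega))
      | t+1 => exact hv t (by omega)

lemma upper_bound (n k' N : ℕ) (hn0 : 0 < n)
    (c : (Fin (k'+2) → Fin N) → Fin 2) (hc : ¬ HasMonoPathK (k'+2) n c) :
    N ≤ Nat.card {F : PT n k' // PT.IsPart n k' F} := by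
  set V := {F : PT n k' // PT.IsPart n k' F} with hV
  haveI : Finite V := Subtype.finite
  set Φ : Fin N → V := fun v => ⟨psi c hn0 k' (fun _ => v), psi_isPart hn0 k' _⟩ with hΦ
  have hinj : Function.Injective Φ := by
    intro u v huv
    by_contra hne
    have hPT : psi c hn0 k' (fun _ => u) = psi c hn0 k' (fun _ => v) := by
      have := congrArg Subtype.val huv
      exact this
    have key : ∀ u v : Fin N, u < v →
        ¬ PT.Sub n k' (psi c hn0 k' (fun _ => v)) (psi c hn0 k' (fun _ => u)) := by
      intro u v huv'
      have h := psi_key hn0 hc k' (le_refl k') (fun _ => u) v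
        (by intro s t hst htl; omega) (by intro t ht; exact huv')
      have heq : shiftL (k'+1-k') (fun _ => u) v = (fun _ => v) := by
        funext t
        show (if t + 1 < k'+1-k' then u else v) = v
        rw [if_neg (by omega)]
      rwa [heq] at h
    rcases lt_trichotomy u v with h | h | h
    · exact key u v h (hPT ▸ sub_refl k' _)
    · exact hne (by rw [h])
    · exact key v u h (hPT ▸ sub_refl k' _)
  calc N = Nat.card (Fin N) := by rw [Nat.card_eq_fintype_card, Fintype.card_fin]
  _ ≤ Nat.card V := Nat.card_le_card_of_injective Φ hinj

end Upper2

end MS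

/-- For every `k ≥ 2`, `n ≥ 2`: `N_k(2,n) = ρ_k(n) + 1`, where `ρ_k(n) = |P^k[n]|` is
the number of order-`k` line partitions. -/
theorem stmt17 (k n : ℕ) (hk : 2 ≤ k) (hn : 2 ≤ n) :
    sInf {N : ℕ | ∀ c : (Fin k → Fin N) → Fin 2, HasMonoPathK k n c}
      = Nat.card {F : PT n (k - 2) // PT.IsPart n (k - 2) F} + 1 := by
  obtain ⟨k', rfl⟩ : ∃ k', k = k' + 2 := ⟨k - 2, by omega⟩

  have hn0 : 0 < n := by omega
  set ρ := Nat.card {F : PT n k' // PT.IsPart n k' F} with hρ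
  have hmem : (ρ + 1) ∈ {N : ℕ | ∀ c : (Fin (k'+2) → Fin (ρ+1)) → Fin 2,
      HasMonoPathK (k'+2) n c} := by
    intro c
    by_contra hnc
    have := MS.upper_bound n k' (ρ+1) hn0 c hnc
    omega
  have hlow : ∀ N ∈ {N : ℕ | ∀ c : (Fin (k'+2) → Fin N) → Fin 2,
      HasMonoPathK (k'+2) n c}, ρ + 1 ≤ N := by
    intro N hN
    by_contra h
    obtain ⟨c, hc⟩ := MS.lower_bound n k' N hn0 (by omega)
    exact hc (hN c)
  exact le_antisymm (Nat.sInf_le hmem) (hlow _ (Nat.sInf_mem ⟨ρ+1, hmem⟩))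
end

section
/- For every k ≥ 4, q ≥ 2, and n ≥ 2, N_k(q,n) ≥ 2^{N_{k-1}(q,n)/N_{k-2}(q,n)}. -/
set_option maxRecDepth 10000


/-- `N_k(q,n)`: the least `N` such that every `q`-coloring of the `k`-subsets of
`{1,…,N}` contains a monochromatic monotone path of length `n`. -/
noncomputable def Nk (k q n : ℕ) : ℕ :=
  sInf {N : ℕ | ∀ c : (Fin k → Fin N) → Fin q, HasMonoPathK k n c}

open Classical

/-- no monochromatic "free" monotone path of length n for coloring of k-tuples of a preorder -/
def NoFree (k n q : ℕ) {α : Type} [Preorder α] (c : (Fin k → α) → Fin q) : Prop :=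
  ¬ ∃ x : Fin (n + k - 1) → α,
    (∀ i : ℕ, (h : i + 1 < n + k - 1) → ¬ (x ⟨i+1, h⟩ ≤ x ⟨i, by omega⟩)) ∧
    ∃ col : Fin q, ∀ i : ℕ, ∀ _ : i < n,
      c (fun j => x ⟨i + j.1, by have := j.2; omega⟩) = col

lemma pairlem {q n : ℕ} (hq : 1 ≤ q) (v : Fin 2 → (Fin q → Fin n)) (col : Fin q)
    (hv : ∃ j, v 0 j < v 1 j)
    (hc : (if h : ∃ j, v 0 j < v 1 j then h.choose else (⟨0, hq⟩ : Fin q)) = col) :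
    v 0 col < v 1 col := by
  rw [dif_pos hv] at hc
  rw [← hc]
  exact hv.choose_spec

lemma base_nofree (q n : ℕ) (hq : 1 ≤ q) :
    ∃ c : (Fin 2 → (Fin q → Fin n)) → Fin q, NoFree 2 n q c := by
  refine ⟨fun v => if h : ∃ j, v 0 j < v 1 j then h.choose else ⟨0, hq⟩, ?_⟩
  rintro ⟨x, hfree, col, hcol⟩
  have key : ∀ i : ℕ, (h : i < n) → (x ⟨i, by omega⟩) col < (x ⟨i+1, by omega⟩) col := by
    intro i hi
    have h1 := hfree i (by omega)
    have hex : ∃ j, (x ⟨i, by omega⟩) j < (x ⟨i+1, by omega⟩) j := by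
      by_contra hco
      push_neg at hco
      exact h1 (fun j => hco j)
    exact pairlem hq (fun j : Fin 2 => x ⟨i + j.1, by have := j.2; omega⟩) col hex (hcol i hi)
  have hg : StrictMono (fun i : Fin (n+1) => (x ⟨i.1, by have := i.2; omega⟩) col) := by
    rw [Fin.strictMono_iff_lt_succ]
    intro i
    exact key i.1 i.2
  have := Fintype.card_le_of_injective _ hg.injective
  simp at this

noncomputable def pk {α : Type} [Preorder α] [Nonempty α] (X Y : LowerSet α) : α :=
  if h : ((Y : Set α) \ (X : Set α)).Nonempty then h.choose else Classical.arbitrary α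

lemma pk_spec {α : Type} [Preorder α] [Nonempty α] {X Y : LowerSet α} (h : ¬ Y ≤ X) :
    pk X Y ∈ (Y : Set α) ∧ pk X Y ∉ (X : Set α) := by
  have hne : ((Y : Set α) \ (X : Set α)).Nonempty := by
    rw [Set.diff_nonempty]
    intro hsub
    exact h (LowerSet.coe_subset_coe.mp hsub)
  unfold pk
  rw [dif_pos hne]
  exact ⟨hne.choose_spec.1, hne.choose_spec.2⟩

lemma step_nofree {α : Type} [Preorder α] [Nonempty α] {k n q : ℕ} (hk : 2 ≤ k)
    (c : (Fin k → α) → Fin q) (hc : NoFree k n q c) :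
    ∃ c' : (Fin (k+1) → LowerSet α) → Fin q, NoFree (k+1) n q c' := by
  refine ⟨fun A => c (fun i => pk (A ⟨i.1, by have := i.2; omega⟩) (A ⟨i.1+1, by have := i.2; omega⟩)), ?_⟩
  rintro ⟨A, hfree, col, hcol⟩
  have hmem : ∀ i : ℕ, (h : i + 1 < n + (k+1) - 1) →
      pk (A ⟨i, by omega⟩) (A ⟨i+1, h⟩) ∈ (A ⟨i+1, h⟩ : Set α) ∧
      pk (A ⟨i, by omega⟩) (A ⟨i+1, h⟩) ∉ (A ⟨i, by omega⟩ : Set α) :=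
    fun i h => pk_spec (hfree i h)
  apply hc
  refine ⟨fun i => pk (A ⟨i.1, by have := i.2; omega⟩) (A ⟨i.1+1, by have := i.2; omega⟩), ?_, col, ?_⟩
  · intro i h hle
    have m1 := hmem i (by omega)
    have m2 := hmem (i+1) (by omega)
    exact m2.2 ((A ⟨i+1, by omega⟩).lower hle m1.1)
  · intro i hi
    exact hcol i hi

structure FPO : Type 1 where
  carrier : Type
  [po : PartialOrder carrier]
  [fin : Finite carrier]

attribute [instance] FPO.po FPO.fin

instance {β : Type} [Preorder β] [Finite β] : Finite (LowerSet β) :=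
  Finite.of_injective (fun s => (s : Set β)) SetLike.coe_injective

def Tw (q n : ℕ) : ℕ → FPO
  | 0 => ⟨Fin q → Fin n⟩
  | m+1 => ⟨LowerSet (Tw q n m).carrier⟩

lemma Tw_nonempty (q n : ℕ) (hn : 1 ≤ n) : ∀ m, Nonempty (Tw q n m).carrier
  | 0 => ⟨fun _ => ⟨0, hn⟩⟩
  | m+1 => ⟨(⊥ : LowerSet (Tw q n m).carrier)⟩

lemma tower_nofree (q n : ℕ) (hq : 1 ≤ q) (hn : 1 ≤ n) (m : ℕ) :
    ∃ c : (Fin (m+2) → (Tw q n m).carrier) → Fin q, NoFree (m+2) n q c := by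
  induction m with
  | zero => exact base_nofree q n hq
  | succ m ih =>
    obtain ⟨c, hc⟩ := ih
    haveI : Nonempty (Tw q n m).carrier := Tw_nonempty q n hn m
    exact step_nofree (by omega) c hc

def Hprop (N t : ℕ) (W : Type) [Preorder W] : Prop :=
  ∃ g : (Fin t → Fin N) → W, ∀ w : Fin (t+1) → Fin N, StrictMono w →
    ¬ (g (fun i => w i.succ) ≤ g (fun i => w i.castSucc))

lemma Hbase {k q n N : ℕ} (hk : 2 ≤ k) (hq : 1 ≤ q) (hn : 1 ≤ n)
    (c : (Fin k → Fin N) → Fin q) (hc : ¬ HasMonoPathK k n c) :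
    Hprop N (k-1) (Fin q → Fin n) := by
  classical
  set S : (Fin (k-1) → Fin N) → Fin q → Set ℕ := fun u j =>
    {L | ∃ y : Fin (L + (k-1)) → Fin N, StrictMono y ∧
      (∀ i : ℕ, (hi : i < L) → c (fun j' : Fin k => y ⟨i + j'.1, by have := j'.2; omega⟩) = j) ∧
      (∀ i : Fin (k-1), y ⟨L + i.1, by have := i.2; omega⟩ = u i)} with hS
  have hboundN : ∀ u j, ∀ L ∈ S u j, L ≤ N := by
    intro u j L hL
    obtain ⟨y, hy, -, -⟩ := hL
    have := Fintype.card_le_of_injective y hy.injective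
    simp at this
    omega
  have hbdd : ∀ u j, BddAbove (S u j) := fun u j => ⟨N, fun L hL => hboundN u j L hL⟩
  have hlt : ∀ u j, ∀ L ∈ S u j, L < n := by
    intro u j L hL
    by_contra hge
    push_neg at hge
    obtain ⟨y, hy, hwin, -⟩ := hL
    apply hc
    refine ⟨fun i => y ⟨i.1, by have := i.2; omega⟩, ?_, j, ?_⟩
    · intro a b hab
      exact hy (Fin.mk_lt_mk.mpr hab)
    · intro i hi
      exact hwin i (by omega)
  have h0mem : ∀ u, StrictMono u → ∀ j, 0 ∈ S u j := by
    intro u hu j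
    refine ⟨fun i => u ⟨i.1, by have := i.2; omega⟩, ?_, ?_, ?_⟩
    · intro a b hab
      exact hu (Fin.mk_lt_mk.mpr hab)
    · intro i hi
      exact absurd hi (by omega)
    · intro i
      exact congrArg u (Fin.ext (show 0 + i.1 = i.1 by omega))
  haveI : Inhabited (Fin q → Fin n) := ⟨fun _ => ⟨0, hn⟩⟩
  refine ⟨fun u => if hu : StrictMono u then
      (fun j => (⟨sSup (S u j), hlt u j _ (Nat.sSup_mem ⟨0, h0mem u hu j⟩ (hbdd u j))⟩ : Fin n))
    else default, ?_⟩
  intro w hw hle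
  have hwt : StrictMono (fun i : Fin (k-1) => w i.succ) := fun a b hab =>
    hw (Fin.succ_lt_succ_iff.mpr hab)
  have hwi : StrictMono (fun i : Fin (k-1) => w i.castSucc) := fun a b hab =>
    hw (Fin.castSucc_lt_castSucc_iff.mpr hab)
  beta_reduce at hle
  rw [dif_pos hwt, dif_pos hwi] at hle
  set tl := fun i : Fin (k-1) => w i.succ with htl
  set ini := fun i : Fin (k-1) => w i.castSucc with hini
  set j₀ := c (fun j' : Fin k => w ⟨j'.1, by have := j'.2; omega⟩) with hj₀
  set L := sSup (S ini j₀) with hLdef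
  have hLmem : L ∈ S ini j₀ := Nat.sSup_mem ⟨0, h0mem ini hwi j₀⟩ (hbdd ini j₀)
  obtain ⟨y, hy, hwin, hlast⟩ := hLmem
  set y' : Fin ((L+1) + (k-1)) → Fin N := fun i =>
    if h : i.1 < L + (k-1) then y ⟨i.1, h⟩ else w ⟨k-1, by omega⟩ with hy'def
  have hnew : (L+1) ∈ S tl j₀ := by
    refine ⟨y', ?_, ?_, ?_⟩
    · intro a b hab
      have hab' : a.1 < b.1 := hab
      by_cases hbb : b.1 < L + (k-1)
      · have ea : y' a = y ⟨a.1, by omega⟩ := by simp only [hy'def]; rw [dif_pos (by omega)]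
        have eb : y' b = y ⟨b.1, hbb⟩ := by simp only [hy'def]; rw [dif_pos hbb]
        rw [ea, eb]
        exact hy (Fin.mk_lt_mk.mpr hab')
      · have hbv : b.1 = L + (k-1) := by have := b.2; omega
        have eb : y' b = w ⟨k-1, by omega⟩ := by simp only [hy'def]; rw [dif_neg (by omega)]
        by_cases haa : a.1 < L + (k-1)
        · have ea : y' a = y ⟨a.1, haa⟩ := by simp only [hy'def]; rw [dif_pos haa]
          rw [ea, eb]
          have h1 : y ⟨a.1, haa⟩ ≤ y ⟨L + (k-2), by omega⟩ :=
            hy.monotone (Fin.mk_le_mk.mpr (by omega))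
          have h2 : y ⟨L + (k-2), by omega⟩ = w (Fin.castSucc ⟨k-2, by omega⟩) :=
            hlast ⟨k-2, by omega⟩
          have h3 : w (Fin.castSucc ⟨k-2, by omega⟩) < w ⟨k-1, by omega⟩ :=
            hw (Fin.mk_lt_mk.mpr (by omega))
          exact lt_of_le_of_lt (h1.trans_eq h2) h3
        · exact absurd hab' (by omega)
    · intro i hi
      by_cases hiL : i < L
      · have harg : (fun j' : Fin k => y' ⟨i + j'.1, by have := j'.2; omega⟩)
            = (fun j' : Fin k => y ⟨i + j'.1, by have := j'.2; omega⟩) := by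
          funext j'
          simp only [hy'def]
          rw [dif_pos (by have := j'.2; omega)]
        exact (congrArg c harg).trans (hwin i hiL)
      · have hiL' : i = L := by omega
        have harg : (fun j' : Fin k => y' ⟨i + j'.1, by have := j'.2; omega⟩)
            = (fun j' : Fin k => w ⟨j'.1, by have := j'.2; omega⟩) := by
          funext j'
          by_cases hj' : j'.1 < k - 1
          · have e0 : y' ⟨i + j'.1, by have := j'.2; omega⟩ = y ⟨L + j'.1, by omega⟩ := by
              simp only [hy'def]
              rw [dif_pos (by have := j'.2; omega)]
              exact congrArg y (Fin.ext (show i + j'.1 = L + j'.1 by omega))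
            have e2 : y ⟨L + j'.1, by omega⟩ = w (Fin.castSucc ⟨j'.1, hj'⟩) := hlast ⟨j'.1, hj'⟩
            exact (e0.trans e2).trans (congrArg w (Fin.ext rfl))
          · have e0 : y' ⟨i + j'.1, by have := j'.2; omega⟩ = w ⟨k-1, by omega⟩ := by
              simp only [hy'def]
              rw [dif_neg (by omega)]
            exact e0.trans (congrArg w (Fin.ext (show k-1 = j'.1 by have := j'.2; omega)))
        exact (congrArg c harg).trans hj₀.symm
    · intro i
      by_cases hi2 : i.1 < k - 2
      · have e1 : y' ⟨L+1+i.1, by have := i.2; omega⟩ = y ⟨L + (i.1+1), by have := i.2; omega⟩ := by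
          simp only [hy'def]
          rw [dif_pos (by have := i.2; omega)]
          exact congrArg y (Fin.ext (show L+1+i.1 = L + (i.1+1) by omega))
        have e3 : y ⟨L + (i.1+1), by have := i.2; omega⟩ = w (Fin.castSucc ⟨i.1+1, by omega⟩) :=
          hlast ⟨i.1+1, by omega⟩
        have e4 : w (Fin.castSucc ⟨i.1+1, by omega⟩) = w i.succ :=
          congrArg w (Fin.ext rfl)
        exact (e1.trans e3).trans e4
      · have hi3 : i.1 = k-2 := by have := i.2; omega
        have e1 : y' ⟨L+1+i.1, by have := i.2; omega⟩ = w ⟨k-1, by omega⟩ := by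
          simp only [hy'def]
          rw [dif_neg (by omega)]
        exact e1.trans (congrArg w (Fin.ext (show k-1 = i.1+1 by omega)))
  have hge : L + 1 ≤ sSup (S tl j₀) := le_csSup (hbdd tl j₀) hnew
  have h9 : sSup (S tl j₀) ≤ sSup (S ini j₀) := hle j₀
  have : L + 1 ≤ L := by rw [hLdef]; exact hge.trans h9
  omega

lemma cons_strictMono {N m : ℕ} {v : Fin N} {u : Fin (m+1) → Fin N}
    (hu : StrictMono u) (hv : v < u 0) : StrictMono (Fin.cons v u : Fin (m+2) → Fin N) := by
  rw [Fin.strictMono_iff_lt_succ]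
  intro i
  rcases Fin.eq_zero_or_eq_succ i with h0 | ⟨i', rfl⟩
  · subst h0
    rw [Fin.castSucc_zero, Fin.cons_zero, Fin.cons_succ]
    exact hv
  · rw [← Fin.succ_castSucc, Fin.cons_succ, Fin.cons_succ]
    exact hu Fin.castSucc_lt_succ

lemma Hstep {N t : ℕ} (ht : 1 ≤ t) {W : Type} [Preorder W]
    (h : Hprop N (t+1) W) : Hprop N t (LowerSet W) := by
  obtain ⟨m, rfl⟩ : ∃ m, t = m + 1 := ⟨t - 1, by omega⟩
  obtain ⟨g, hg⟩ := h
  refine ⟨fun u => if hu : StrictMono u then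
      (⟨{a | ∃ v : Fin N, v < u ⟨0, by omega⟩ ∧ a ≤ g (Fin.cons v u)}, ?_⟩ : LowerSet W)
    else ⊥, ?_⟩
  · intro a b hba ha
    obtain ⟨v, hv, hle⟩ := ha
    exact ⟨v, hv, hba.trans hle⟩
  · intro w hw hle
    have hwt : StrictMono (fun i : Fin (m+1) => w i.succ) := fun a b hab =>
      hw (Fin.succ_lt_succ_iff.mpr hab)
    have hwi : StrictMono (fun i : Fin (m+1) => w i.castSucc) := fun a b hab =>
      hw (Fin.castSucc_lt_castSucc_iff.mpr hab)
    beta_reduce at hle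
    rw [dif_pos hwt, dif_pos hwi] at hle
    rw [← LowerSet.coe_subset_coe] at hle
    have hmem1 : g w ∈ {a : W | ∃ v : Fin N, v < (fun i : Fin (m+1) => w i.succ) ⟨0, by omega⟩ ∧
        a ≤ g (Fin.cons v (fun i : Fin (m+1) => w i.succ))} := by
      refine ⟨w 0, ?_, ?_⟩
      · exact hw (by
          have : ((0 : Fin (m+2))) = (⟨0, by omega⟩ : Fin (m+2)) := Fin.ext rfl
          rw [this]
          exact Fin.mk_lt_mk.mpr (by omega))
      · have hcons : (Fin.cons (w 0) (fun i : Fin (m+1) => w i.succ) : Fin (m+2) → Fin N) = w :=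
          Fin.cons_self_tail w
        rw [hcons]
    have hmem2 := hle hmem1
    obtain ⟨v, hv, hle2⟩ := hmem2
    have hv0 : v < w 0 := hv.trans_eq (congrArg w (Fin.ext rfl))
    have hw' : StrictMono (Fin.cons v w : Fin (m+3) → Fin N) := cons_strictMono hw hv0
    have hfin := hg (Fin.cons v w) hw'
    apply hfin
    have e1 : (fun i : Fin (m+2) => (Fin.cons v w : Fin (m+3) → Fin N) i.succ) = w := by
      funext i
      rw [Fin.cons_succ]
    have e2 : (fun i : Fin (m+2) => (Fin.cons v w : Fin (m+3) → Fin N) i.castSucc)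
        = Fin.cons v (fun i : Fin (m+1) => w i.castSucc) := by
      funext i
      rcases Fin.eq_zero_or_eq_succ i with h0 | ⟨i', rfl⟩
      · subst h0
        rw [Fin.castSucc_zero, Fin.cons_zero, Fin.cons_zero]
      · rw [← Fin.succ_castSucc, Fin.cons_succ, Fin.cons_succ]
    rw [e1, e2]
    exact hle2

lemma Hchain {k q n N : ℕ} (hk : 2 ≤ k) (hq : 1 ≤ q) (hn : 1 ≤ n)
    (c : (Fin k → Fin N) → Fin q) (hc : ¬ HasMonoPathK k n c) :
    ∀ m, m ≤ k - 2 → Hprop N (k-1-m) (Tw q n m).carrier := by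
  intro m
  induction m with
  | zero =>
    intro _
    exact Hbase hk hq hn c hc
  | succ m ih =>
    intro hm
    have h1 := ih (by omega)
    have e : k-1-m = (k-1-(m+1)) + 1 := by omega
    rw [e] at h1
    exact Hstep (by omega) h1

lemma upper {k q n N : ℕ} (hk : 2 ≤ k) (hq : 1 ≤ q) (hn : 1 ≤ n)
    (c : (Fin k → Fin N) → Fin q) (hc : ¬ HasMonoPathK k n c) :
    N ≤ Nat.card (Tw q n (k-2)).carrier := by
  have h1 := Hchain hk hq hn c hc (k-2) le_rfl
  have e : k - 1 - (k-2) = 1 := by omega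
  rw [e] at h1
  obtain ⟨g, hg⟩ := h1
  have key : ∀ a b : Fin N, a < b → ¬ (g (fun _ => b) ≤ g (fun _ => a)) := by
    intro a b hab
    have hw : StrictMono (fun i : Fin 2 => if i.1 = 0 then a else b) := by
      intro i j hij
      have hij' : i.1 < j.1 := hij
      have hi0 : i.1 = 0 := by have := i.2; have := j.2; omega
      have hj1 : j.1 = 1 := by have := i.2; have := j.2; omega
      simp only [hi0, hj1]
      simpa using hab
    have h2 := hg _ hw
    have e1 : (fun i : Fin 1 => (fun i : Fin 2 => if i.1 = 0 then a else b) i.succ)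
        = (fun _ : Fin 1 => b) := by
      funext i
      simp [Fin.val_succ]
    have e2 : (fun i : Fin 1 => (fun i : Fin 2 => if i.1 = 0 then a else b) i.castSucc)
        = (fun _ : Fin 1 => a) := by
      funext i
      have : i.castSucc.1 = 0 := by simp
      simp [this]
    rw [e1, e2] at h2
    exact h2
  have hinj : Function.Injective (fun a : Fin N => g (fun _ => a)) := by
    intro a b hab
    by_contra hne
    rcases Ne.lt_or_gt hne with hlt | hlt
    · exact key a b hlt (le_of_eq hab.symm)
    · exact key b a hlt (le_of_eq hab)
  have := Nat.card_le_card_of_injective _ hinj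
  simpa using this

lemma lower {k q n N : ℕ} (hk : 2 ≤ k) (hq : 1 ≤ q) (hn : 1 ≤ n)
    (hN : N ≤ Nat.card (Tw q n (k-2)).carrier) :
    ∃ c : (Fin k → Fin N) → Fin q, ¬ HasMonoPathK k n c := by
  obtain ⟨m, rfl⟩ : ∃ m, k = m + 2 := ⟨k-2, by omega⟩
  have hN' : N ≤ Nat.card (Tw q n m).carrier := by
    have e : m + 2 - 2 = m := by omega
    rwa [e] at hN
  set T := (Tw q n m).carrier with hT
  obtain ⟨c₀, hc₀⟩ := tower_nofree q n hq hn m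
  letI : Fintype T := Fintype.ofFinite T
  haveI : Finite (LinearExtension T) := inferInstanceAs (Finite T)
  letI : Fintype (LinearExtension T) := Fintype.ofFinite _
  have hcard : N ≤ Fintype.card (LinearExtension T) := by
    have e1 : Fintype.card (LinearExtension T) = Fintype.card T :=
      Fintype.card_congr (Equiv.refl T).symm
    rw [e1, ← Nat.card_eq_fintype_card]
    exact hN'
  have hccc : Fintype.card (LinearExtension T) = Fintype.card (LinearExtension T) := rfl
  let eiso := monoEquivOfFin (LinearExtension T) hccc
  let E : Fin N → T := fun a => (eiso (Fin.castLE hcard a) : LinearExtension T)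
  have key : ∀ a b : Fin N, a < b → ¬ (E b ≤ E a) := by
    intro a b hab hle
    have h2 : toLinearExtension (E b) ≤ toLinearExtension (E a) :=
      toLinearExtension.monotone hle
    have h3 : eiso (Fin.castLE hcard a) < eiso (Fin.castLE hcard b) :=
      eiso.strictMono (by exact hab)
    have h4 : (eiso (Fin.castLE hcard b) : LinearExtension T) ≤ eiso (Fin.castLE hcard a) := h2
    exact absurd (h3.trans_le h4) (lt_irrefl _)
  refine ⟨fun v => c₀ (fun i => E (v i)), ?_⟩
  rintro ⟨x, hx, col, hcol⟩
  apply hc₀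
  refine ⟨fun i => E (x i), ?_, col, ?_⟩
  · intro i h hle
    have hlt : x ⟨i, by omega⟩ < x ⟨i+1, h⟩ := hx (Fin.mk_lt_mk.mpr (by omega))
    exact key _ _ hlt hle
  · intro i hi
    exact hcol i hi

lemma Nk_eq {k q n : ℕ} (hk : 2 ≤ k) (hq : 1 ≤ q) (hn : 1 ≤ n) :
    Nk k q n = Nat.card (Tw q n (k-2)).carrier + 1 := by
  set ρ := Nat.card (Tw q n (k-2)).carrier with hρ
  have hmem : (ρ + 1) ∈ {N : ℕ | ∀ c : (Fin k → Fin N) → Fin q, HasMonoPathK k n c} := by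
    intro c
    by_contra hcon
    have := upper hk hq hn c hcon
    omega
  apply le_antisymm
  · exact Nat.sInf_le hmem
  · refine le_csInf ⟨_, hmem⟩ ?_
    intro N hN
    by_contra hlt
    push_neg at hlt
    obtain ⟨c, hcon⟩ := lower hk hq hn (show N ≤ ρ by omega)
    exact hcon (hN c)

lemma counting {P : Type} [PartialOrder P] [Finite P] [Nonempty P] :
    (2:ℝ) ^ (((Nat.card (LowerSet P) : ℝ) + 1) / ((Nat.card P : ℝ) + 1)) ≤
      (Nat.card (LowerSet (LowerSet P)) : ℝ) + 1 := by
  classical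
  letI : Fintype P := Fintype.ofFinite P
  letI : Fintype (LowerSet P) := Fintype.ofFinite _
  letI : Fintype (LowerSet (LowerSet P)) := Fintype.ofFinite _
  set b := Nat.card P with hb
  set a := Nat.card (LowerSet P) with ha
  set r := Nat.card (LowerSet (LowerSet P)) with hr
  have hb1 : 1 ≤ b := Nat.card_pos
  have ha1 : 1 ≤ a := Nat.card_pos
  have hcrd_le : ∀ X : LowerSet P, (X : Set P).ncard ≤ b := by
    intro X
    have := Set.ncard_le_ncard (Set.subset_univ (X : Set P)) Set.finite_univ
    rwa [Set.ncard_univ] at this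
  set fib : ℕ → Finset (LowerSet P) :=
    fun i => Finset.univ.filter (fun X => (X : Set P).ncard = i) with hfib
  have hsum : a = ∑ i ∈ Finset.range (b+1), (fib i).card := by
    rw [ha, Nat.card_eq_fintype_card, ← Finset.card_univ]
    exact Finset.card_eq_sum_card_fiberwise (fun X _ => Finset.mem_range.mpr (by
      have := hcrd_le X; omega))
  set s := (Finset.range (b+1)).sup (fun i => (fib i).card) with hs
  have hsum_le : a ≤ (b+1) * s := by
    rw [hsum]
    calc ∑ i ∈ Finset.range (b+1), (fib i).card
        ≤ (Finset.range (b+1)).card • s :=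
          Finset.sum_le_card_nsmul _ _ s (fun i hi => by
            rw [hs]; exact Finset.le_sup (f := fun i => (fib i).card) hi)
      _ = (b+1) * s := by simp [smul_eq_mul]
  have hfib0 : (fib 0).card ≤ 1 := by
    rw [Finset.card_le_one]
    intro X hX Y hY
    simp only [hfib, Finset.mem_filter] at hX hY
    have hX0 : (X : Set P) = ∅ := by
      rw [← Set.ncard_eq_zero (Set.toFinite _)]; exact hX.2
    have hY0 : (Y : Set P) = ∅ := by
      rw [← Set.ncard_eq_zero (Set.toFinite _)]; exact hY.2
    exact SetLike.coe_injective (hX0.trans hY0.symm)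
  have hsum2 : a ≤ b * s + 1 := by
    rw [hsum, Finset.sum_range_succ']
    have h1 : ∑ i ∈ Finset.range b, (fib (i+1)).card ≤ b * s := by
      calc ∑ i ∈ Finset.range b, (fib (i+1)).card
          ≤ (Finset.range b).card • s := Finset.sum_le_card_nsmul _ _ s
            (fun i hi => by
              rw [hs]
              exact Finset.le_sup (f := fun i => (fib i).card) (Finset.mem_range.mpr
                (by have := Finset.mem_range.mp hi; omega)))
        _ = b * s := by simp [smul_eq_mul]
    omega
  have h2s : 2 ^ s ≤ r := by
    obtain ⟨i0, hi0mem, hi0⟩ := Finset.exists_mem_eq_sup (Finset.range (b+1))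
      ⟨0, Finset.mem_range.mpr (by omega)⟩ (fun i => (fib i).card)
    have hdir : ∀ F G : Finset (LowerSet P), F ⊆ fib i0 → G ⊆ fib i0 →
        lowerClosure (F : Set (LowerSet P)) = lowerClosure (G : Set (LowerSet P)) → F ⊆ G := by
      intro F G hF hG hFG X hX
      have h1 : (X : LowerSet P) ∈ lowerClosure (G : Set (LowerSet P)) := by
        rw [← hFG]
        exact subset_lowerClosure (Finset.mem_coe.mpr hX)
      obtain ⟨Y, hY, hXY⟩ := mem_lowerClosure.mp h1
      have hXc : (X : Set P).ncard = i0 := by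
        have := hF hX; simp only [hfib, Finset.mem_filter] at this; exact this.2
      have hYc : (Y : Set P).ncard = i0 := by
        have := hG (Finset.mem_coe.mp hY)
        simp only [hfib, Finset.mem_filter] at this; exact this.2
      have hcc : (X : Set P) = (Y : Set P) :=
        Set.eq_of_subset_of_ncard_le (LowerSet.coe_subset_coe.mpr hXY)
          (le_of_eq (hYc.trans hXc.symm)) (Set.toFinite _)
      have hXY' : X = Y := SetLike.coe_injective hcc
      rw [hXY']
      exact Finset.mem_coe.mp hY
    have hcard := Finset.card_le_card_of_injOn
      (fun F : Finset (LowerSet P) => lowerClosure (F : Set (LowerSet P)))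
      (fun F _ => Finset.mem_univ (α := LowerSet (LowerSet P)) _)
      (s := (fib i0).powerset) (t := Finset.univ)
      (by
        intro F hF G hG h
        have hF' : F ⊆ fib i0 := Finset.mem_powerset.mp (by simpa using hF)
        have hG' : G ⊆ fib i0 := Finset.mem_powerset.mp (by simpa using hG)
        exact Finset.Subset.antisymm (hdir F G hF' hG' h) (hdir G F hG' hF' h.symm))
    rw [Finset.card_powerset, Finset.card_univ, ← Nat.card_eq_fintype_card] at hcard
    rw [hs, hi0, hr]
    exact hcard
  have hIic_ne_bot : ∀ X : LowerSet P, LowerSet.Iic X ≠ ⊥ := by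
    intro X h
    have h1 : X ∈ LowerSet.Iic X := LowerSet.mem_Iic_iff.mpr le_rfl
    rw [h] at h1
    simpa using h1
  have hIic_inj : ∀ X Y : LowerSet P, LowerSet.Iic X = LowerSet.Iic Y → X = Y := by
    intro X Y h
    have h1 : X ≤ Y := LowerSet.mem_Iic_iff.mp (by rw [← h]; exact LowerSet.mem_Iic_iff.mpr le_rfl)
    have h2 : Y ≤ X := LowerSet.mem_Iic_iff.mp (by rw [h]; exact LowerSet.mem_Iic_iff.mpr le_rfl)
    exact le_antisymm h1 h2
  have har : a + 1 ≤ r := by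
    have hinj : Function.Injective (fun o : Option (LowerSet P) =>
        Option.elim o (⊥ : LowerSet (LowerSet P)) (fun X => LowerSet.Iic X)) := by
      intro o1 o2 h
      match o1, o2 with
      | none, none => rfl
      | some X, some Y =>
        simp only [Option.elim] at h
        rw [hIic_inj X Y h]
      | none, some X =>
        simp only [Option.elim] at h
        exact absurd h.symm (hIic_ne_bot X)
      | some X, none =>
        simp only [Option.elim] at h
        exact absurd h (hIic_ne_bot X)
    have := Fintype.card_le_of_injective _ hinj
    rw [Fintype.card_option] at this
    rw [ha, hr, Nat.card_eq_fintype_card, Nat.card_eq_fintype_card]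
    exact this
  have hr2 : 2 ≤ r := by
    have hne : (⊥ : LowerSet (LowerSet P)) ≠ ⊤ := by
      intro h
      have h1 : (⊥ : LowerSet P) ∈ (⊤ : LowerSet (LowerSet P)) := by simp
      rw [← h] at h1
      simpa using h1
    haveI : Nontrivial (LowerSet (LowerSet P)) := ⟨⟨⊥, ⊤, hne⟩⟩
    rw [hr, Nat.card_eq_fintype_card]
    exact Fintype.one_lt_card_iff_nontrivial.mpr this
  -- final real arithmetic
  by_cases hcase : ((a:ℝ)+1)/((b:ℝ)+1) ≤ (s:ℝ)
  · have h1 : (2:ℝ) ^ (((a:ℝ)+1)/((b:ℝ)+1)) ≤ (2:ℝ) ^ (s:ℝ) :=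
      Real.rpow_le_rpow_of_exponent_le one_le_two hcase
    have h2 : (2:ℝ) ^ (s:ℝ) = ((2^s : ℕ) : ℝ) := by
      rw [Real.rpow_natCast]; push_cast; ring
    have h3 : ((2^s : ℕ) : ℝ) ≤ (r:ℝ) := by exact_mod_cast h2s
    linarith
  · push_neg at hcase
    have hb0 : (0:ℝ) < (b:ℝ)+1 := by positivity
    have h1 : (s:ℝ) * ((b:ℝ)+1) < (a:ℝ)+1 := (lt_div_iff₀ hb0).mp hcase
    have h1' : s * (b+1) < a + 1 := by exact_mod_cast h1
    have e1 : s * (b+1) ≤ a := by omega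
    have e2 : a = s * (b+1) := by
      have := hsum_le
      rw [mul_comm] at this
      omega
    have h6 : 1 ≤ s := by
      by_contra h
      push_neg at h
      rw [show s = 0 by omega] at e2
      simp at e2
      omega
    have h5 : s = 1 := by nlinarith [e2, hsum2]
    have ha_eq : a = b + 1 := by rw [h5] at e2; simpa using e2
    have hexp : ((a:ℝ)+1)/((b:ℝ)+1) ≤ 3/2 := by
      rw [ha_eq]
      push_cast
      rw [div_le_div_iff₀ (by positivity) (by norm_num)]
      have : (1:ℝ) ≤ (b:ℝ) := by exact_mod_cast hb1
      linarith
    have h23 : (2:ℝ) ^ ((3:ℝ)/2) ≤ 3 := by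
      have hx : ((2:ℝ) ^ ((3:ℝ)/2))^(2:ℕ) = 8 := by
        rw [← Real.rpow_natCast ((2:ℝ)^((3:ℝ)/2)) 2, ← Real.rpow_mul (by norm_num)]
        norm_num
      have hpos : (0:ℝ) ≤ (2:ℝ) ^ ((3:ℝ)/2) := Real.rpow_nonneg (by norm_num) _
      nlinarith [hx, hpos]
    have hfin : (2:ℝ) ^ (((a:ℝ)+1)/((b:ℝ)+1)) ≤ 3 :=
      le_trans (Real.rpow_le_rpow_of_exponent_le one_le_two hexp) h23
    have h7 : (3:ℝ) ≤ (r:ℝ)+1 := by exact_mod_cast (by omega : 3 ≤ r+1)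
    linarith

/-- For every `k ≥ 4`, `q ≥ 2`, `n ≥ 2`:
`N_k(q,n) ≥ 2^{N_{k-1}(q,n)/N_{k-2}(q,n)}`. -/
theorem stmt18 (k q n : ℕ) (hk : 4 ≤ k) (hq : 2 ≤ q) (hn : 2 ≤ n) :
    (2 : ℝ) ^ ((Nk (k - 1) q n : ℝ) / (Nk (k - 2) q n : ℝ)) ≤ (Nk k q n : ℝ) := by
  obtain ⟨m, rfl⟩ : ∃ m, k = m + 4 := ⟨k - 4, by omega⟩
  have e1 : m + 4 - 1 = m + 3 := by omega
  have e2 : m + 4 - 2 = m + 2 := by omega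
  rw [e1, e2]
  have h2 := Nk_eq (k := m+2) (q := q) (n := n) (by omega) (by omega) (by omega)
  have h3 := Nk_eq (k := m+3) (q := q) (n := n) (by omega) (by omega) (by omega)
  have h4 := Nk_eq (k := m+4) (q := q) (n := n) (by omega) (by omega) (by omega)
  rw [show m+2-2 = m from by omega] at h2
  rw [show m+3-2 = m+1 from by omega] at h3
  rw [show m+4-2 = m+2 from by omega] at h4
  rw [h2, h3, h4]
  haveI : Nonempty (Tw q n m).carrier := Tw_nonempty q n (by omega) m
  have hcnt := counting (P := (Tw q n m).carrier)
  push_cast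
  push_cast at hcnt
  exact hcnt
end

section
/- Define the tower function t_k(x) by t_1(x) = x and t_{k+1}(x) = 2^{t_k(x)}. For every k ≥ 2 and real numbers a, b with a ≥ b + 1 and a ≥ 3, one has t_k(a) − t_k(b) ≥ t_k(a − 2^{-(k-2)}). -/
/-- The tower function: `tower 0 x = x` and `tower (k+1) x = 2^{tower k x}`,
so that the paper's `t_k(x)` is `tower (k-1) x` (a tower of height `k-1` with `x` on
top). -/
noncomputable def tower : ℕ → ℝ → ℝ
  | 0, x => x
  | k + 1, x => 2 ^ tower k x

open Real

lemma tower_succ (k : ℕ) (x : ℝ) : tower (k+1) x = (2:ℝ) ^ (tower k x) := rfl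

lemma tower_mono (m : ℕ) : Monotone (tower m) := by
  induction m with
  | zero => exact fun x y h => h
  | succ m ih => exact fun x y h => Real.rpow_le_rpow_of_exponent_le one_le_two (ih h)

lemma rpow_self_le {t : ℝ} (ht : 2 ≤ t) : t + 2 ≤ (2:ℝ) ^ t := by
  have h4 : (2:ℝ)^t = 4 * (2:ℝ)^(t-2) := by
    rw [show (4:ℝ) = (2:ℝ)^(2:ℝ) by
      rw [show (2:ℝ) = ((2:ℕ):ℝ) by norm_num, Real.rpow_natCast]; norm_num,
      ← Real.rpow_add two_pos]; ring_nf
  have he : (2:ℝ)^(t-2) = Real.exp ((t-2) * Real.log 2) := by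
    rw [Real.rpow_def_of_pos two_pos]; ring_nf
  have hexp : 1 + (t-2) * Real.log 2 ≤ Real.exp ((t-2) * Real.log 2) :=
    by linarith [Real.add_one_le_exp ((t-2) * Real.log 2)]
  have hl : (0.6931471803 : ℝ) < Real.log 2 := Real.log_two_gt_d9
  nlinarith [hexp, hl]

lemma tower_self_le (m : ℕ) {x : ℝ} (hx : 2 ≤ x) : x ≤ tower m x := by
  induction m with
  | zero => exact le_refl x
  | succ m ih =>
    have h2 : 2 ≤ tower m x := le_trans hx ih
    have := rpow_self_le h2
    rw [tower_succ]; linarith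

lemma tower_two (m : ℕ) (hm : 1 ≤ m) : (m:ℝ) + 3 ≤ tower m 2 := by
  induction m, hm using Nat.le_induction with
  | base =>
    rw [tower_succ, show tower 0 2 = 2 from rfl,
      show (2:ℝ) = ((2:ℕ):ℝ) by norm_num, Real.rpow_natCast]; norm_num
  | succ m hm ih =>
    have h2 : 2 ≤ tower m 2 := by push_cast at ih ⊢; linarith
    have := rpow_self_le h2
    rw [tower_succ]; push_cast at ih ⊢; linarith

lemma rpow_gap {t ε : ℝ} (ht : 2 ≤ t) (hε0 : 0 ≤ ε) (hε1 : ε ≤ 1) :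
    (2:ℝ) ^ t + ε ≤ (2:ℝ) ^ (t + ε) := by
  have h4 : (4:ℝ) ≤ (2:ℝ)^t := by
    calc (4:ℝ) = (2:ℝ)^(2:ℝ) := by
          rw [show (2:ℝ) = ((2:ℕ):ℝ) by norm_num, Real.rpow_natCast]; norm_num
    _ ≤ (2:ℝ)^t := Real.rpow_le_rpow_of_exponent_le one_le_two ht
  have hsplit : (2:ℝ)^(t+ε) = (2:ℝ)^t * (2:ℝ)^ε := Real.rpow_add two_pos t ε
  have he : (2:ℝ)^ε = Real.exp (ε * Real.log 2) := by
    rw [Real.rpow_def_of_pos two_pos]; ring_nf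
  have hexp : 1 + ε * Real.log 2 ≤ Real.exp (ε * Real.log 2) :=
    by linarith [Real.add_one_le_exp (ε * Real.log 2)]
  have hl : (0.6931471803 : ℝ) < Real.log 2 := Real.log_two_gt_d9
  have hpos : (0:ℝ) < (2:ℝ)^t := Real.rpow_pos_of_pos two_pos t
  rw [hsplit, he]
  have hlp : (0:ℝ) ≤ Real.log 2 := by linarith
  nlinarith [mul_le_mul_of_nonneg_left hexp hpos.le,
    mul_le_mul_of_nonneg_right h4 (mul_nonneg hε0 hlp),
    mul_nonneg hε0 hlp]

lemma tower_gap (m : ℕ) {x ε : ℝ} (hx : 2 ≤ x) (hε0 : 0 ≤ ε) (hε1 : ε ≤ 1) :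
    tower m x + ε ≤ tower m (x + ε) := by
  induction m with
  | zero => exact le_refl _
  | succ m ih =>
    have hT2 : 2 ≤ tower m x := le_trans hx (tower_self_le m hx)
    calc tower (m+1) x + ε = (2:ℝ)^(tower m x) + ε := rfl
      _ ≤ (2:ℝ)^(tower m x + ε) := rpow_gap hT2 hε0 hε1
      _ ≤ (2:ℝ)^(tower m (x + ε)) := Real.rpow_le_rpow_of_exponent_le one_le_two ih
      _ = tower (m+1) (x + ε) := rfl

lemma main_ind (m : ℕ) (hm : 1 ≤ m) : ∀ a b : ℝ, 0 < b → b + 1 ≤ a → 3 ≤ a →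
    tower m (a - (2:ℝ) ^ (-((m:ℝ) - 1))) ≤ tower m a - tower m b := by
  induction m, hm using Nat.le_induction with
  | base =>
    intro a b hb hab ha
    have he : -(((1:ℕ):ℝ) - 1) = 0 := by norm_num
    rw [he, Real.rpow_zero]
    have h1 : tower 1 b ≤ (2:ℝ)^(a-1) := by
      rw [tower_succ]
      exact Real.rpow_le_rpow_of_exponent_le one_le_two
        (show tower 0 b ≤ a - 1 by show b ≤ a - 1; linarith)
    have h2 : tower 1 a = 2 * (2:ℝ)^(a-1) := by
      rw [tower_succ, show tower 0 a = (a-1) + 1 from by show a = a - 1 + 1; ring,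
        Real.rpow_add two_pos, Real.rpow_one]; ring
    have h3 : tower 1 (a - 1) = (2:ℝ)^(a-1) := rfl
    rw [h3, h2]; linarith
  | succ m hm ih =>
    intro a b hb hab ha
    set q : ℝ := (2:ℝ)^(-(m:ℝ)) with hq
    have hqpos : 0 < q := Real.rpow_pos_of_pos two_pos _
    have hqhalf : q ≤ 1/2 := by
      have : (2:ℝ)^(-(m:ℝ)) ≤ (2:ℝ)^(-(1:ℝ)) := by
        apply Real.rpow_le_rpow_of_exponent_le one_le_two
        have : (1:ℝ) ≤ (m:ℝ) := by exact_mod_cast hm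
        linarith
      rw [Real.rpow_neg_one] at this
      linarith [this]
    -- old epsilon bound: 2^(-(m-1)) ≤ 1
    have holde : (2:ℝ)^(-((m:ℝ)-1)) ≤ 1 := by
      rw [show (1:ℝ) = (2:ℝ)^(0:ℝ) from (Real.rpow_zero 2).symm]
      apply Real.rpow_le_rpow_of_exponent_le one_le_two
      have : (1:ℝ) ≤ (m:ℝ) := by exact_mod_cast hm
      linarith
    have holdpos : 0 < (2:ℝ)^(-((m:ℝ)-1)) := Real.rpow_pos_of_pos two_pos _
    -- IH
    have hIH := ih a b hb hab ha
    -- D := tower m a - tower m b ≥ m + 3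
    have hDlow : (m:ℝ) + 3 ≤ tower m a - tower m b := by
      have h2le : (2:ℝ) ≤ a - (2:ℝ)^(-((m:ℝ)-1)) := by linarith
      have := le_trans (tower_two m hm)
        (tower_mono m (by linarith : (2:ℝ) ≤ a - (2:ℝ)^(-((m:ℝ)-1))))
      linarith
    -- gap: tower m (a - q) + q ≤ tower m a
    have hgap : tower m (a - q) + q ≤ tower m a := by
      have := tower_gap m (x := a - q) (ε := q) (by linarith) hqpos.le (by linarith)
      simpa using this
    set X := tower m a with hX
    set Y := tower m b with hY
    -- 2^(tower m (a-q)) ≤ 2^(X - q)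
    have hA : (2:ℝ)^(tower m (a - q)) ≤ (2:ℝ)^(X - q) :=
      Real.rpow_le_rpow_of_exponent_le one_le_two (by linarith)
    have hB : (2:ℝ)^Y ≤ (2:ℝ)^(X - ((m:ℝ)+3)) :=
      Real.rpow_le_rpow_of_exponent_le one_le_two (by linarith)
    have hXpos : (0:ℝ) < (2:ℝ)^X := Real.rpow_pos_of_pos two_pos _
    have hsplit1 : (2:ℝ)^(X - q) = (2:ℝ)^X * (2:ℝ)^(-q) := by
      rw [← Real.rpow_add two_pos]; ring_nf
    have hsplit2 : (2:ℝ)^(X - ((m:ℝ)+3)) = (2:ℝ)^X * ((2:ℝ)^(-((m:ℝ)+3))) := by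
      rw [← Real.rpow_add two_pos]; ring_nf
    have h8 : (2:ℝ)^(-(3:ℝ)) = 1/8 := by
      rw [Real.rpow_neg (by norm_num : (0:ℝ) ≤ 2),
        show (3:ℝ) = ((3:ℕ):ℝ) by norm_num, Real.rpow_natCast]; norm_num
    have hq8 : (2:ℝ)^(-((m:ℝ)+3)) = q / 8 := by
      rw [hq, show -((m:ℝ)+3) = -(m:ℝ) + -(3:ℝ) by ring, Real.rpow_add two_pos, h8]
      ring
    -- 2^(-q) bound
    set l : ℝ := Real.log 2 with hldef
    have hl : (0.6931471803 : ℝ) < l := Real.log_two_gt_d9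
    have hcdef : (2:ℝ)^(-q) = Real.exp (-(q * l)) := by
      rw [Real.rpow_def_of_pos two_pos, ← hldef]; ring_nf
    set c : ℝ := (2:ℝ)^(-q) with hc
    have hcpos : 0 < c := Real.rpow_pos_of_pos two_pos _
    have hkey : c * (1 + q * l) ≤ 1 := by
      have h1 : 1 + q * l ≤ Real.exp (q * l) := by
        linarith [Real.add_one_le_exp (q * l)]
      have h2 : c * Real.exp (q * l) = 1 := by
        rw [hcdef, ← Real.exp_add]; simp
      calc c * (1 + q * l) ≤ c * Real.exp (q * l) :=
            mul_le_mul_of_nonneg_left h1 hcpos.le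
        _ = 1 := h2
    -- combine
    have hfrac : c + q / 8 ≤ 1 := by
      nlinarith [hkey, hcpos, hqpos, hqhalf, hl,
        mul_pos hqpos (lt_trans (by norm_num) hl)]
    have hexp2 : a - (2:ℝ) ^ (-((((m+1):ℕ):ℝ) - 1)) = a - q := by
      rw [hq]; congr 2; push_cast; ring
    rw [tower_succ, tower_succ, tower_succ, hexp2]
    have hYb : (2:ℝ)^Y ≤ (2:ℝ)^X * (q/8) := by
      rw [← hq8, ← hsplit2]; exact hB
    have hAq : (2:ℝ)^(tower m (a - q)) ≤ (2:ℝ)^X * c := by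
      rw [hc, ← hsplit1]; exact hA
    nlinarith [hYb, hAq, hXpos, hfrac, mul_le_mul_of_nonneg_left hfrac hXpos.le]

/-- For `k ≥ 2` and positive reals `a ≥ b + 1` with `a ≥ 3`,
`t_k(a) − t_k(b) ≥ t_k(a − 2^{-(k-2)})`. -/
theorem stmt19 (k : ℕ) (hk : 2 ≤ k) (a b : ℝ) (hb : 0 < b) (hab : b + 1 ≤ a)
    (ha : 3 ≤ a) :
    tower (k - 1) (a - (2 : ℝ) ^ (-((k : ℝ) - 2))) ≤ tower (k - 1) a - tower (k - 1) b := by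
  obtain ⟨m, rfl⟩ : ∃ m, k = m + 1 := ⟨k - 1, (Nat.succ_pred_eq_of_pos (by omega)).symm⟩
  have hm : 1 ≤ m := by omega
  have hcast : -(((m+1:ℕ):ℝ) - 2) = -((m:ℝ) - 1) := by push_cast; ring
  have hk1 : m + 1 - 1 = m := rfl
  rw [hk1, hcast]
  exact main_ind m hm a b hb hab ha
end
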